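/- Let G = K_{2m} − M where M is a perfect matching in the complete graph K_{2m} (m ≥ 3). Then for every edge (x,y) of G, the Ollivier–Ricci curvature equals κ(x,y) = (2m−4)/(2m−2). -/

import Mathlib

open Finset
open scoped Classical

section OllivierRicciDefs

variable {V : Type*} [Fintype V]

/-- A coupling between two (finitely supported) measures on `V`. -/
def IsCoupling (μ ν : V → ℝ) (A : V → V → ℝ) : Prop :=
  (∀ u v, 0 ≤ A u v) ∧ (∀ u, ∑ v, A u v = μ u) ∧ (∀ v, ∑ u, A u v = ν v)

/-- The degree of a vertex. -/
noncomputable def graphDeg (G : SimpleGraph V) (x : V) : ℕ :=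
  (G.neighborSet x).ncard

/-- The uniform probability measure on the neighborhood of `x`. -/
noncomputable def vertexMeasure (G : SimpleGraph V) (x : V) : V → ℝ :=
  fun v => if G.Adj x v then (1 : ℝ) / (graphDeg G x : ℝ) else 0

/-- The 1-Wasserstein distance between two measures, w.r.t. the graph distance. -/
noncomputable def wassersteinDist (G : SimpleGraph V) (μ ν : V → ℝ) : ℝ :=
  sInf {c : ℝ | ∃ A : V → V → ℝ, IsCoupling μ ν A ∧
    c = ∑ u : V, ∑ v : V, A u v * (G.dist u v : ℝ)}

/-- The Ollivier–Ricci curvature of a pair of vertices. -/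
noncomputable def ricciCurv (G : SimpleGraph V) (x y : V) : ℝ :=
  1 - wassersteinDist G (vertexMeasure G x) (vertexMeasure G y) / (G.dist x y : ℝ)

/-- The number of triangles containing the edge `(x, y)`, i.e. the number of
common neighbors of `x` and `y`. -/
noncomputable def triCount (G : SimpleGraph V) (x y : V) : ℕ :=
  (G.neighborSet x ∩ G.neighborSet y).ncard

/-- A finite set of unordered pairs forms a matching: no loops, and the
edges are pairwise vertex-disjoint. -/
def IsMatchingSet {α : Type*} (M : Finset (Sym2 α)) : Prop :=
  (∀ e ∈ M, ¬ e.IsDiag) ∧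
  (M : Set (Sym2 α)).Pairwise (fun e f => ∀ x, x ∈ e → x ∉ f)

end OllivierRicciDefs

set_option maxHeartbeats 1000000 in
theorem stmt4 (m : ℕ) (hm : 3 ≤ m)
    (M : Finset (Sym2 (Fin (2 * m)))) (hM : IsMatchingSet M)
    (hMcard : M.card = m) (hperf : ∀ x : Fin (2 * m), ∃ e ∈ M, x ∈ e)
    (G : SimpleGraph (Fin (2 * m))) (hG : G = ⊤ \ SimpleGraph.fromEdgeSet ↑M)
    (x y : Fin (2 * m)) (hxy : G.Adj x y) :
    ricciCurv G x y = (2 * (m : ℝ) - 4) / (2 * (m : ℝ) - 2) := by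
  classical
  -- adjacency characterization
  have hadjM : ∀ u v : Fin (2 * m), G.Adj u v ↔ u ≠ v ∧ s(u, v) ∉ M := by
    subst hG
    intro u v
    simp only [SimpleGraph.sdiff_adj, SimpleGraph.top_adj, SimpleGraph.fromEdgeSet_adj,
      Finset.mem_coe]
    tauto
  -- partner function
  have hpex : ∀ u : Fin (2 * m), ∃ q, s(u, q) ∈ M ∧ ∀ w, s(u, w) ∈ M → w = q := by
    intro u
    obtain ⟨e, heM, hue⟩ := hperf u
    refine ⟨Sym2.Mem.other hue, ?_, ?_⟩
    · rwa [Sym2.other_spec hue]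
    · intro w hw
      have he : e = s(u, w) := by
        by_contra hne
        exact hM.2 heM hw hne u hue (Sym2.mem_mk_left u w)
      rw [← Sym2.other_spec hue] at he
      exact (Sym2.congr_right.mp he).symm
  choose p hpM hpu using hpex
  have hpne : ∀ u, p u ≠ u := by
    intro u h
    exact hM.1 _ (hpM u) (Sym2.mk_isDiag_iff.mpr h.symm)
  have hpp : ∀ u, p (p u) = u := by
    intro u
    have h : s(p u, u) ∈ M := by rw [Sym2.eq_swap]; exact hpM u
    exact (hpu (p u) u h).symm
  have hpinj : ∀ u v, p u = p v → u = v := by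
    intro u v h
    rw [← hpp u, h, hpp]
  -- adjacency via partner
  have hadj : ∀ u v : Fin (2 * m), G.Adj u v ↔ u ≠ v ∧ v ≠ p u := by
    intro u v
    rw [hadjM]
    constructor
    · rintro ⟨h1, h2⟩
      exact ⟨h1, fun hv => h2 (hv ▸ hpM u)⟩
    · rintro ⟨h1, h2⟩
      exact ⟨h1, fun hm' => h2 (hpu u v hm')⟩
  -- degree
  have hdeg : ∀ u, graphDeg G u = 2 * m - 2 := by
    intro u
    have hset : G.neighborSet u =
        ↑((Finset.univ : Finset (Fin (2 * m))) \ {u, p u}) := by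
      ext v
      simp only [SimpleGraph.mem_neighborSet, hadj, Finset.coe_sdiff, Finset.coe_univ,
        Set.mem_diff, Set.mem_univ, true_and, Finset.coe_insert, Finset.coe_singleton,
        Set.mem_insert_iff, Set.mem_singleton_iff, not_or, ne_eq]
      constructor
      · rintro ⟨h1, h2⟩; exact ⟨fun h => h1 h.symm, h2⟩
      · rintro ⟨h1, h2⟩; exact ⟨fun h => h1 h.symm, h2⟩
    rw [graphDeg, hset, Set.ncard_coe_finset, Finset.card_sdiff_of_subset (by simp)]
    rw [Finset.card_insert_of_notMem (by simpa using fun h => (hpne u) h.symm),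
      Finset.card_singleton, Finset.card_univ, Fintype.card_fin]
  -- the constant c
  set c : ℝ := 1 / ((2 * m - 2 : ℕ) : ℝ) with hc_def
  have h2m : (2 : ℕ) ≤ 2 * m := by omega
  have hcastdeg : ((2 * m - 2 : ℕ) : ℝ) = 2 * (m : ℝ) - 2 := by
    push_cast [Nat.cast_sub h2m]
    ring
  have hm3 : (3 : ℝ) ≤ (m : ℝ) := by exact_mod_cast hm
  have hden : (2 : ℝ) * (m : ℝ) - 2 ≠ 0 := by nlinarith
  have hcpos : 0 < c := by
    rw [hc_def, hcastdeg]
    have : (0:ℝ) < 2 * (m:ℝ) - 2 := by nlinarith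
    positivity
  have hmeas : ∀ u v, vertexMeasure G u v = if G.Adj u v then c else 0 := by
    intro u v
    rw [vertexMeasure, hdeg]
  -- distinctness facts
  have hxy' : x ≠ y := ((hadj x y).mp hxy).1
  have hypx : y ≠ p x := ((hadj x y).mp hxy).2
  have hxpy : x ≠ p y := fun h => hypx (by rw [← hpp y, ← h])
  have hpxpy : p x ≠ p y := fun h => hxy' (hpinj _ _ h)
  have hxpx : x ≠ p x := fun h => hpne x h.symm
  have hypy : y ≠ p y := fun h => hpne y h.symm
  have hAxy : G.Adj x y := hxy
  have hAyx : G.Adj y x := hxy.symm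
  have hAxpy : G.Adj x (p y) := (hadj x (p y)).mpr ⟨hxpy, fun h => hpxpy h.symm⟩
  have hAypx : G.Adj y (p x) := (hadj y (p x)).mpr ⟨fun h => hypx h, fun h => hpxpy h⟩
  have hApypx : G.Adj (p y) (p x) := by
    refine (hadj (p y) (p x)).mpr ⟨fun h => hpxpy h.symm, ?_⟩
    rw [hpp]
    exact fun h => hypx h.symm
  have hnyy : ¬ G.Adj y y := G.irrefl
  have hnypy : ¬ G.Adj y (p y) := by
    rw [hadj]; push_neg; intro _; rfl
  have hnxx : ¬ G.Adj x x := G.irrefl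
  have hnxpx : ¬ G.Adj x (p x) := by
    rw [hadj]; push_neg; intro _; rfl
  -- distances
  have hdxy : G.dist x y = 1 := SimpleGraph.dist_eq_one_iff_adj.mpr hAxy
  have hdyx : G.dist y x = 1 := SimpleGraph.dist_eq_one_iff_adj.mpr hAyx
  have hdpypx : G.dist (p y) (p x) = 1 := SimpleGraph.dist_eq_one_iff_adj.mpr hApypx
  set μ := vertexMeasure G x with hμ
  set ν := vertexMeasure G y with hν
  have hμy : μ y = c := by rw [hμ, hmeas, if_pos hAxy]
  have hμpy : μ (p y) = c := by rw [hμ, hmeas, if_pos hAxpy]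
  have hνy : ν y = 0 := by rw [hν, hmeas, if_neg hnyy]
  have hνpy : ν (p y) = 0 := by rw [hν, hmeas, if_neg hnypy]
  -- the explicit coupling
  set A : Fin (2 * m) → Fin (2 * m) → ℝ := fun u v =>
    if u = y ∧ v = x then c
    else if u = p y ∧ v = p x then c
    else if u = v ∧ u ≠ x ∧ u ≠ p x ∧ u ≠ y ∧ u ≠ p y then c else 0 with hA_def
  have hAnn : ∀ u v, 0 ≤ A u v := by
    intro u v
    simp only [hA_def]
    split_ifs <;> first | exact hcpos.le | exact le_refl 0
  have hArow : ∀ u, (∑ v, A u v) = μ u := by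
    intro u
    rcases eq_or_ne u y with rfl | huy
    · have hv : ∀ v, A u v = if v = x then c else 0 := by
        intro v
        simp only [hA_def]
        by_cases hvx : v = x
        · rw [if_pos ⟨by trivial, hvx⟩, if_pos hvx]
        · rw [if_neg (fun h => hvx h.2), if_neg (fun h => hypy h.1),
            if_neg (fun h => h.2.2.2.1 rfl), if_neg hvx]
      rw [Finset.sum_congr rfl (fun v _ => hv v),
        Finset.sum_ite_eq' Finset.univ x (fun _ => c), if_pos (Finset.mem_univ x), hμy]
    rcases eq_or_ne u (p y) with rfl | hupy
    · have hv : ∀ v, A (p y) v = if v = p x then c else 0 := by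
        intro v
        simp only [hA_def]
        by_cases hvpx : v = p x
        · rw [if_neg (fun h => hpne y h.1), if_pos ⟨by trivial, hvpx⟩, if_pos hvpx]
        · rw [if_neg (fun h => hpne y h.1), if_neg (fun h => hvpx h.2),
            if_neg (fun h => h.2.2.2.2 rfl), if_neg hvpx]
      rw [Finset.sum_congr rfl (fun v _ => hv v),
        Finset.sum_ite_eq' Finset.univ (p x) (fun _ => c), if_pos (Finset.mem_univ (p x)), hμpy]
    · have hv : ∀ v, A u v =
          if u = v then (if u ≠ x ∧ u ≠ p x then c else 0) else 0 := by
        intro v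
        simp only [hA_def]
        rw [if_neg (fun h => huy h.1), if_neg (fun h => hupy h.1)]
        by_cases huv : u = v
        · rw [if_pos huv]
          by_cases hx : u ≠ x ∧ u ≠ p x
          · rw [if_pos ⟨huv, hx.1, hx.2, huy, hupy⟩, if_pos hx]
          · rw [if_neg (fun h => hx ⟨h.2.1, h.2.2.1⟩), if_neg hx]
        · rw [if_neg (fun h => huv h.1), if_neg huv]
      rw [Finset.sum_congr rfl (fun v _ => hv v),
        Finset.sum_ite_eq Finset.univ u (fun _ => if u ≠ x ∧ u ≠ p x then c else 0),
        if_pos (Finset.mem_univ u), hμ, hmeas]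
      by_cases hxu : G.Adj x u
      · have h := (hadj x u).mp hxu
        rw [if_pos ⟨fun e => h.1 e.symm, h.2⟩, if_pos hxu]
      · rw [if_neg (fun h => hxu ((hadj x u).mpr ⟨fun e => h.1 e.symm, h.2⟩)), if_neg hxu]
  have hAcol : ∀ v, (∑ u, A u v) = ν v := by
    intro v
    rcases eq_or_ne v x with rfl | hvx
    · have hu : ∀ u, A u v = if u = y then c else 0 := by
        intro u
        simp only [hA_def]
        by_cases huy : u = y
        · rw [if_pos ⟨huy, by trivial⟩, if_pos huy]
        · rw [if_neg (fun h => huy h.1), if_neg (fun h => hxpx h.2),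
            if_neg (fun h => h.2.1 h.1), if_neg huy]
      rw [Finset.sum_congr rfl (fun u _ => hu u),
        Finset.sum_ite_eq' Finset.univ y (fun _ => c), if_pos (Finset.mem_univ y),
        hν, hmeas, if_pos hAyx]
    rcases eq_or_ne v (p x) with rfl | hvpx
    · have hu : ∀ u, A u (p x) = if u = p y then c else 0 := by
        intro u
        simp only [hA_def]
        by_cases hupy : u = p y
        · rw [if_neg (fun h => hpne x h.2), if_pos ⟨hupy, by trivial⟩, if_pos hupy]
        · rw [if_neg (fun h => hpne x h.2), if_neg (fun h => hupy h.1),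
            if_neg (fun h => h.2.2.1 h.1), if_neg hupy]
      rw [Finset.sum_congr rfl (fun u _ => hu u),
        Finset.sum_ite_eq' Finset.univ (p y) (fun _ => c), if_pos (Finset.mem_univ (p y)),
        hν, hmeas, if_pos hAypx]
    · have hu : ∀ u, A u v =
          if u = v then (if v ≠ y ∧ v ≠ p y then c else 0) else 0 := by
        intro u
        simp only [hA_def]
        rw [if_neg (fun h => hvx h.2), if_neg (fun h => hvpx h.2)]
        by_cases huv : u = v
        · subst huv
          by_cases hy : u ≠ y ∧ u ≠ p y
          · rw [if_pos ⟨rfl, hvx, hvpx, hy.1, hy.2⟩, if_pos rfl, if_pos hy]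
          · rw [if_neg (fun h => hy ⟨h.2.2.2.1, h.2.2.2.2⟩), if_pos rfl, if_neg hy]
        · rw [if_neg (fun h => huv h.1), if_neg huv]
      rw [Finset.sum_congr rfl (fun u _ => hu u),
        Finset.sum_ite_eq' Finset.univ v (fun _ => if v ≠ y ∧ v ≠ p y then c else 0),
        if_pos (Finset.mem_univ v), hν, hmeas]
      by_cases hyv : G.Adj y v
      · have h := (hadj y v).mp hyv
        rw [if_pos ⟨fun e => h.1 e.symm, h.2⟩, if_pos hyv]
      · rw [if_neg (fun h => hyv ((hadj y v).mpr ⟨fun e => h.1 e.symm, h.2⟩)), if_neg hyv]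
  have hAcoupling : IsCoupling μ ν A := ⟨hAnn, hArow, hAcol⟩
  -- cost of the explicit coupling
  have hone : ∀ (a b : Fin (2 * m)),
      (∑ u, ∑ v, (if u = a ∧ v = b then c else 0)) = c := by
    intro a b
    have hin : ∀ u : Fin (2 * m),
        (∑ v, (if u = a ∧ v = b then c else 0)) = if u = a then c else 0 := by
      intro u
      by_cases hu : u = a
      · simp [hu, Finset.sum_ite_eq']
      · simp [hu]
    rw [Finset.sum_congr rfl (fun u _ => hin u),
      Finset.sum_ite_eq' Finset.univ a (fun _ => c), if_pos (Finset.mem_univ a)]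
  have hAcost : (∑ u, ∑ v, A u v * (G.dist u v : ℝ)) = c + c := by
    have hpt : ∀ u v, A u v * (G.dist u v : ℝ) =
        (if u = y ∧ v = x then c else 0) + (if u = p y ∧ v = p x then c else 0) := by
      intro u v
      simp only [hA_def]
      by_cases h1 : u = y ∧ v = x
      · obtain ⟨rfl, rfl⟩ := h1
        rw [if_pos ⟨rfl, rfl⟩, hdyx, if_pos ⟨rfl, rfl⟩, if_neg (fun h => hypy h.1)]
        norm_num
      by_cases h2 : u = p y ∧ v = p x
      · obtain ⟨rfl, rfl⟩ := h2
        rw [if_neg h1, if_pos ⟨rfl, rfl⟩, hdpypx, if_neg h1, if_pos ⟨rfl, rfl⟩]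
        norm_num
      · rw [if_neg h1, if_neg h2, if_neg h1, if_neg h2]
        by_cases h3 : u = v ∧ u ≠ x ∧ u ≠ p x ∧ u ≠ y ∧ u ≠ p y
        · rw [if_pos h3]
          obtain ⟨rfl, -⟩ := h3
          rw [SimpleGraph.dist_self]
          norm_num
        · rw [if_neg h3, zero_mul, add_zero]
    rw [Finset.sum_congr rfl (fun u _ => Finset.sum_congr rfl (fun v _ => hpt u v)),
      Finset.sum_congr rfl (fun u _ => Finset.sum_add_distrib),
      Finset.sum_add_distrib, hone y x, hone (p y) (p x)]
  -- lower bound via the 1-Lipschitz test function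
  set f : Fin (2 * m) → ℝ := fun u => if u = y ∨ u = p y then 1 else 0 with hf_def
  have hfy : f y = 1 := by simp [hf_def]
  have hfpy : f (p y) = 1 := by simp [hf_def]
  have hLip : ∀ u v, f u - f v ≤ (G.dist u v : ℝ) := by
    intro u v
    by_cases hu : u = y ∨ u = p y
    · by_cases hv : v = y ∨ v = p y
      · simp only [hf_def, if_pos hu, if_pos hv, sub_self]
        exact Nat.cast_nonneg _
      · have huv : G.Adj u v := by
          refine (hadj u v).mpr ⟨?_, ?_⟩
          · intro h; exact hv (h ▸ hu)
          · intro h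
            rcases hu with rfl | rfl
            · exact hv (Or.inr h)
            · rw [hpp] at h; exact hv (Or.inl h)
        rw [SimpleGraph.dist_eq_one_iff_adj.mpr huv]
        simp only [hf_def, if_pos hu, if_neg hv, sub_zero, Nat.cast_one, le_refl]
    · have h0 : f u = 0 := by simp only [hf_def]; exact if_neg hu
      have h1 : 0 ≤ f v := by
        simp only [hf_def]
        split_ifs <;> norm_num
      have h2 : (0:ℝ) ≤ (G.dist u v : ℝ) := Nat.cast_nonneg _
      rw [h0]
      linarith
  have hsumf : ∀ (g : Fin (2 * m) → ℝ), (∑ u, g u * f u) = g y + g (p y) := by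
    intro g
    have h1 : ∀ u, g u * f u =
        (if u = y then g y else 0) + (if u = p y then g (p y) else 0) := by
      intro u
      simp only [hf_def]
      by_cases hy : u = y
      · rw [if_pos (Or.inl hy), if_pos hy, if_neg (fun h => hypy (hy.symm.trans h)),
          mul_one, add_zero, hy]
      by_cases hpy : u = p y
      · rw [if_pos (Or.inr hpy), if_neg (fun h => hypy (h.symm.trans hpy)), if_pos hpy,
          mul_one, zero_add, hpy]
      · rw [if_neg (fun h => h.elim hy hpy), mul_zero, if_neg hy, if_neg hpy, add_zero]
    rw [Finset.sum_congr rfl (fun u _ => h1 u), Finset.sum_add_distrib,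
      Finset.sum_ite_eq' Finset.univ y (fun _ => g y),
      Finset.sum_ite_eq' Finset.univ (p y) (fun _ => g (p y)),
      if_pos (Finset.mem_univ y), if_pos (Finset.mem_univ (p y))]
  have hlb : ∀ z ∈ {z : ℝ | ∃ B : Fin (2 * m) → Fin (2 * m) → ℝ, IsCoupling μ ν B ∧
      z = ∑ u, ∑ v, B u v * (G.dist u v : ℝ)}, c + c ≤ z := by
    rintro z ⟨B, ⟨hBnn, hBrow, hBcol⟩, rfl⟩
    have hval : (∑ u, ∑ v, B u v * (f u - f v)) = c + c := by
      have hsplit : (∑ u, ∑ v, B u v * (f u - f v)) =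
          (∑ u, ∑ v, B u v * f u) - (∑ u, ∑ v, B u v * f v) := by
        rw [← Finset.sum_sub_distrib]
        refine Finset.sum_congr rfl fun u _ => ?_
        rw [← Finset.sum_sub_distrib]
        refine Finset.sum_congr rfl fun v _ => ?_
        ring
      rw [hsplit]
      have hS1 : (∑ u, ∑ v, B u v * f u) = ∑ u, μ u * f u := by
        refine Finset.sum_congr rfl fun u _ => ?_
        rw [← Finset.sum_mul, hBrow]
      have hS2 : (∑ u, ∑ v, B u v * f v) = ∑ v, ν v * f v := by
        rw [Finset.sum_comm]
        refine Finset.sum_congr rfl fun v _ => ?_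
        rw [← Finset.sum_mul, hBcol]
      rw [hS1, hS2, hsumf μ, hsumf ν, hμy, hμpy, hνy, hνpy]
      ring
    calc c + c = ∑ u, ∑ v, B u v * (f u - f v) := hval.symm
      _ ≤ ∑ u, ∑ v, B u v * (G.dist u v : ℝ) := by
          refine Finset.sum_le_sum fun u _ => Finset.sum_le_sum fun v _ => ?_
          exact mul_le_mul_of_nonneg_left (hLip u v) (hBnn u v)
  have hmem : (c + c) ∈ {z : ℝ | ∃ B : Fin (2 * m) → Fin (2 * m) → ℝ, IsCoupling μ ν B ∧
      z = ∑ u, ∑ v, B u v * (G.dist u v : ℝ)} := ⟨A, hAcoupling, hAcost.symm⟩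
  have hW : wassersteinDist G μ ν = c + c := by
    rw [wassersteinDist]
    exact le_antisymm (csInf_le ⟨c + c, fun z hz => hlb z hz⟩ hmem)
      (le_csInf ⟨_, hmem⟩ hlb)
  rw [ricciCurv, ← hμ, ← hν, hW, hdxy, hc_def, hcastdeg]
  rw [Nat.cast_one, div_one]
  rw [← add_div, one_sub_div hden]
  ring
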